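/- Let p ∈ [0, 1/2). There exists a constant C > 0 such that for all h ∈ (0, 1), Σ_{m≥1} λ_m^{-p} ( 1/(1+λ_m h)² - e^{-2 λ_m h} ) / (2 λ_m) ≤ C h^{p + 1/2}. (Note that 1/(1+λh)² - e^{-2λh} ≥ 0 for all λ, h ≥ 0.) -/

import Mathlib

noncomputable def lam (m : ℕ) : ℝ := (Real.pi * m) ^ 2 / 2

-- auxiliary inequalities
lemma aux_nonneg (x : ℝ) (hx : 0 ≤ x) :
    0 ≤ 1 / (1 + x) ^ 2 - Real.exp (-2 * x) := by
  have h1 : (0:ℝ) < 1 + x := by linarith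
  have h2 : (1 + x) ^ 2 ≤ Real.exp (2 * x) := by
    have := Real.add_one_le_exp x
    have he : Real.exp x * Real.exp x = Real.exp (2 * x) := by
      rw [← Real.exp_add]; ring_nf
    nlinarith [Real.exp_pos x]
  have h3 : Real.exp (-2 * x) = 1 / Real.exp (2 * x) := by
    rw [one_div, ← Real.exp_neg]; ring_nf
  rw [h3]
  rw [sub_nonneg]
  apply div_le_div_of_nonneg_left one_pos.le (by positivity) h2

lemma aux_le_sq (x : ℝ) (hx : 0 ≤ x) :
    1 / (1 + x) ^ 2 - Real.exp (-2 * x) ≤ 3 * x ^ 2 := by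
  have h1 : (0:ℝ) < 1 + x := by linarith
  have h2 : 1 + (-2 * x) ≤ Real.exp (-2 * x) := by
    have := Real.add_one_le_exp (-2 * x); linarith
  have h3 : 1 / (1 + x) ^ 2 ≤ 1 - 2 * x + 3 * x ^ 2 := by
    rw [div_le_iff₀ (by positivity)]
    nlinarith [sq_nonneg x, sq_nonneg (x * x)]
  linarith

lemma aux_le_one (x : ℝ) (hx : 0 ≤ x) :
    1 / (1 + x) ^ 2 - Real.exp (-2 * x) ≤ 1 := by
  have h1 : (0:ℝ) < 1 + x := by linarith
  have : 1 / (1 + x) ^ 2 ≤ 1 := by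
    rw [div_le_one (by positivity)]; nlinarith
  have := Real.exp_pos (-2 * x)
  linarith

lemma telesc (M : ℕ) (hM : 1 ≤ M) :
    HasSum (fun k : ℕ => 1 / (((k : ℝ) + M) * ((k : ℝ) + M + 1))) (1 / M) := by
  have hMpos : (0:ℝ) < M := by exact_mod_cast hM
  have hnn : ∀ k : ℕ, 0 ≤ 1 / (((k : ℝ) + M) * ((k : ℝ) + M + 1)) := by
    intro k; positivity
  rw [hasSum_iff_tendsto_nat_of_nonneg hnn]
  have key : ∀ n : ℕ, ∑ k ∈ Finset.range n, 1 / (((k : ℝ) + M) * ((k : ℝ) + M + 1))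
      = 1 / M - 1 / ((n : ℝ) + M) := by
    intro n
    induction n with
    | zero => simp
    | succ n ih =>
      rw [Finset.sum_range_succ, ih]
      have h1 : (0:ℝ) < (n : ℝ) + M := by positivity
      have h2 : (0:ℝ) < (n : ℝ) + M + 1 := by positivity
      push_cast
      field_simp
      ring
  simp only [key]
  have h0 : Filter.Tendsto (fun n : ℕ => 1 / ((n : ℝ) + M)) Filter.atTop (nhds 0) := by
    have ha : Filter.Tendsto (fun n : ℕ => (n : ℝ) + M) Filter.atTop Filter.atTop :=
      Filter.tendsto_atTop_add_const_right _ _ tendsto_natCast_atTop_atTop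
    have := (tendsto_inv_atTop_zero (𝕜 := ℝ)).comp ha
    simpa [one_div, Function.comp_def] using this
  have := (tendsto_const_nhds (x := 1 / (M:ℝ)) (f := Filter.atTop (α := ℕ))).sub h0
  simpa using this



lemma lam_pos (k : ℕ) : 0 < lam (k + 1) := by
  unfold lam
  have : (0:ℝ) < Real.pi := Real.pi_pos
  positivity

lemma lam_lower (k : ℕ) : ((k : ℝ) + 1) ^ 2 ≤ lam (k + 1) := by
  unfold lam
  have h3 : (3:ℝ) ≤ Real.pi := Real.pi_gt_three.le
  have hm : (0:ℝ) ≤ (k : ℝ) + 1 := by positivity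
  have h9 : (9:ℝ) ≤ Real.pi ^ 2 := by nlinarith
  have key : 9 * ((k:ℝ)+1)^2 ≤ Real.pi ^ 2 * ((k:ℝ)+1)^2 :=
    mul_le_mul_of_nonneg_right h9 (sq_nonneg _)
  push_cast
  nlinarith [sq_nonneg ((k:ℝ)+1)]

lemma lam_upper (k : ℕ) : lam (k + 1) ≤ 8 * ((k : ℝ) + 1) ^ 2 := by
  unfold lam
  have h4 : Real.pi ≤ 4 := Real.pi_le_four
  have h0 : (0:ℝ) < Real.pi := Real.pi_pos
  have h16 : Real.pi ^ 2 ≤ 16 := by nlinarith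
  have key : Real.pi ^ 2 * ((k:ℝ)+1)^2 ≤ 16 * ((k:ℝ)+1)^2 :=
    mul_le_mul_of_nonneg_right h16 (sq_nonneg _)
  push_cast
  nlinarith [sq_nonneg ((k:ℝ)+1)]

lemma term_nonneg (p h : ℝ) (hh0 : 0 ≤ h) (k : ℕ) :
    0 ≤ lam (k + 1) ^ (-p) *
        (1 / (1 + lam (k + 1) * h) ^ 2 - Real.exp (-2 * lam (k + 1) * h)) /
        (2 * lam (k + 1)) := by
  have hl := lam_pos k
  have hx : 0 ≤ lam (k + 1) * h := by positivity
  have := aux_nonneg _ hx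
  have h2 : -2 * lam (k+1) * h = -2 * (lam (k+1) * h) := by ring
  rw [h2]
  apply div_nonneg (mul_nonneg (by positivity) this) (by positivity)

lemma term_B1 (p h : ℝ) (hp0 : 0 ≤ p) (hp1 : p ≤ 1) (hh0 : 0 ≤ h) (k : ℕ) :
    lam (k + 1) ^ (-p) *
        (1 / (1 + lam (k + 1) * h) ^ 2 - Real.exp (-2 * lam (k + 1) * h)) /
        (2 * lam (k + 1)) ≤
      12 * ((k : ℝ) + 1) ^ (2 - 2 * p) * h ^ 2 := by
  have hl := lam_pos k
  set l := lam (k + 1) with hldef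
  have hx : 0 ≤ l * h := by positivity
  have hf : 1 / (1 + l * h) ^ 2 - Real.exp (-2 * l * h) ≤ 3 * (l * h) ^ 2 := by
    have := aux_le_sq (l * h) hx
    have h2 : -2 * l * h = -2 * (l * h) := by ring
    rw [h2]; exact this
  have step1 : l ^ (-p) * (1 / (1 + l * h) ^ 2 - Real.exp (-2 * l * h)) / (2 * l)
      ≤ l ^ (-p) * (3 * (l * h) ^ 2) / (2 * l) := by
    gcongr
  have ha : l ^ (-p) * l ^ (2:ℕ) = l ^ (2 - p) := by
    rw [← Real.rpow_natCast l 2, ← Real.rpow_add hl]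
    push_cast
    congr 1
    ring
  have hb : l ^ (1 - p) * l = l ^ (2 - p) := by
    nth_rewrite 2 [← Real.rpow_one l]
    rw [← Real.rpow_add hl]
    ring_nf
  have step2 : l ^ (-p) * (3 * (l * h) ^ 2) / (2 * l) = 3 / 2 * h ^ 2 * l ^ (1 - p) := by
    rw [div_eq_iff (by positivity : (2 * l) ≠ 0)]
    linear_combination (3 * h ^ 2) * ha - (3 * h ^ 2) * hb
  have hm : (0:ℝ) ≤ (k : ℝ) + 1 := by positivity
  have step3 : l ^ (1 - p) ≤ 8 * ((k : ℝ) + 1) ^ (2 - 2 * p) := by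
    have h1 : l ^ (1 - p) ≤ (8 * ((k : ℝ) + 1) ^ 2) ^ (1 - p) :=
      Real.rpow_le_rpow hl.le (lam_upper k) (by linarith)
    have h2 : (8 * ((k : ℝ) + 1) ^ 2) ^ (1 - p)
        = (8:ℝ) ^ (1 - p) * (((k : ℝ) + 1) ^ 2) ^ (1 - p) :=
      Real.mul_rpow (by norm_num) (by positivity)
    have h3 : (((k : ℝ) + 1) ^ 2) ^ (1 - p) = ((k : ℝ) + 1) ^ (2 - 2 * p) := by
      rw [← Real.rpow_natCast ((k:ℝ)+1) 2, ← Real.rpow_mul hm]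
      push_cast
      congr 1
      ring
    have h4 : (8:ℝ) ^ (1 - p) ≤ 8 := by
      calc (8:ℝ) ^ (1 - p) ≤ (8:ℝ) ^ (1:ℝ) :=
            Real.rpow_le_rpow_of_exponent_le (by norm_num) (by linarith)
        _ = 8 := Real.rpow_one 8
    calc l ^ (1 - p) ≤ (8:ℝ) ^ (1 - p) * (((k : ℝ) + 1) ^ 2) ^ (1 - p) := by
          rw [← h2]; exact h1
      _ ≤ 8 * ((k : ℝ) + 1) ^ (2 - 2 * p) := by
          rw [h3]
          have : 0 ≤ ((k : ℝ) + 1) ^ (2 - 2 * p) := Real.rpow_nonneg hm _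
          nlinarith
  calc l ^ (-p) * (1 / (1 + l * h) ^ 2 - Real.exp (-2 * l * h)) / (2 * l)
      ≤ 3 / 2 * h ^ 2 * l ^ (1 - p) := by rw [← step2]; exact step1
    _ ≤ 3 / 2 * h ^ 2 * (8 * ((k : ℝ) + 1) ^ (2 - 2 * p)) := by
        have : (0:ℝ) ≤ 3 / 2 * h ^ 2 := by positivity
        exact mul_le_mul_of_nonneg_left step3 this
    _ = 12 * ((k : ℝ) + 1) ^ (2 - 2 * p) * h ^ 2 := by ring

lemma term_B2 (p h : ℝ) (hp0 : 0 ≤ p) (hh0 : 0 ≤ h) (k : ℕ) :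
    lam (k + 1) ^ (-p) *
        (1 / (1 + lam (k + 1) * h) ^ 2 - Real.exp (-2 * lam (k + 1) * h)) /
        (2 * lam (k + 1)) ≤
      1 / 2 * ((k : ℝ) + 1) ^ (-(2 * p)) * ((k : ℝ) + 1) ^ (-(2:ℝ)) := by
  have hl := lam_pos k
  set l := lam (k + 1) with hldef
  have hx : 0 ≤ l * h := by positivity
  have hm : (0:ℝ) < (k : ℝ) + 1 := by positivity
  have hf : 1 / (1 + l * h) ^ 2 - Real.exp (-2 * l * h) ≤ 1 := by
    have := aux_le_one (l * h) hx
    have h2 : -2 * l * h = -2 * (l * h) := by ring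
    rw [h2]; exact this
  have step1 : l ^ (-p) * (1 / (1 + l * h) ^ 2 - Real.exp (-2 * l * h)) / (2 * l)
      ≤ l ^ (-p) * 1 / (2 * l) := by
    gcongr
  have step2 : l ^ (-p) * 1 / (2 * l) = 1 / 2 * l ^ (-p - 1) := by
    rw [div_eq_iff (by positivity : (2 * l) ≠ 0)]
    have hb : l ^ (-p - 1) * l = l ^ (-p) := by
      nth_rewrite 2 [← Real.rpow_one l]
      rw [← Real.rpow_add hl]
      ring_nf
    linear_combination -hb
  have step3 : l ^ (-p - 1) ≤ ((k : ℝ) + 1) ^ (-(2 * p)) * ((k : ℝ) + 1) ^ (-(2:ℝ)) := by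
    have h1 : l ^ (-p - 1) ≤ (((k : ℝ) + 1) ^ 2) ^ (-p - 1) :=
      Real.rpow_le_rpow_of_nonpos (by positivity) (lam_lower k) (by linarith)
    have h2 : (((k : ℝ) + 1) ^ 2) ^ (-p - 1) = ((k : ℝ) + 1) ^ (-(2 * p) + -(2:ℝ)) := by
      rw [← Real.rpow_natCast ((k:ℝ)+1) 2, ← Real.rpow_mul hm.le]
      push_cast
      congr 1
      ring
    rw [h2] at h1
    rwa [Real.rpow_add hm] at h1
  calc l ^ (-p) * (1 / (1 + l * h) ^ 2 - Real.exp (-2 * l * h)) / (2 * l)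
      ≤ 1 / 2 * l ^ (-p - 1) := by rw [← step2]; exact step1
    _ ≤ 1 / 2 * (((k : ℝ) + 1) ^ (-(2 * p)) * ((k : ℝ) + 1) ^ (-(2:ℝ))) := by
        exact mul_le_mul_of_nonneg_left step3 (by norm_num)
    _ = 1 / 2 * ((k : ℝ) + 1) ^ (-(2 * p)) * ((k : ℝ) + 1) ^ (-(2:ℝ)) := by ring


set_option maxHeartbeats 1000000 in
/-- Bound on the term `δ_3` of the last step of the weak-error decomposition. -/
theorem stmt_13 (p : ℝ) (hp0 : 0 ≤ p) (hp : p < 1 / 2) :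
    ∃ C : ℝ, 0 < C ∧ ∀ h : ℝ, 0 < h → h < 1 →
      ∑' m : ℕ,
        lam (m + 1) ^ (-p) *
          (1 / (1 + lam (m + 1) * h) ^ 2 - Real.exp (-2 * lam (m + 1) * h)) /
          (2 * lam (m + 1)) ≤
        C * h ^ (p + 1 / 2) := by
  refine ⟨100, by norm_num, fun h hh0 hh1 => ?_⟩
  have hhp : (0:ℝ) ≤ h := hh0.le
  have hp1 : p ≤ 1 := by linarith
  set t : ℕ → ℝ := fun k =>
    lam (k + 1) ^ (-p) *
      (1 / (1 + lam (k + 1) * h) ^ 2 - Real.exp (-2 * lam (k + 1) * h)) /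
      (2 * lam (k + 1)) with ht_def
  have hnn : ∀ k, 0 ≤ t k := fun k => term_nonneg p h hhp k
  -- summability
  have hs2 : Summable (fun k : ℕ => ((k:ℝ) + 1) ^ (-(2:ℝ))) := by
    have h1 : Summable (fun n : ℕ => (n:ℝ) ^ (-(2:ℝ))) :=
      Real.summable_nat_rpow.mpr (by norm_num)
    have h2 := (summable_nat_add_iff 1).mpr h1
    simpa using h2
  have hmaj : ∀ k, t k ≤ 1/2 * ((k:ℝ) + 1) ^ (-(2:ℝ)) := by
    intro k
    have b2 := term_B2 p h hp0 hhp k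
    have hk0 : (0:ℝ) ≤ (k:ℝ) := Nat.cast_nonneg k
    have h1 : ((k:ℝ) + 1) ^ (-(2*p)) ≤ 1 :=
      Real.rpow_le_one_of_one_le_of_nonpos (by linarith) (by linarith)
    have h2 : (0:ℝ) ≤ ((k:ℝ) + 1) ^ (-(2:ℝ)) := Real.rpow_nonneg (by positivity) _
    calc t k ≤ 1/2 * ((k:ℝ) + 1) ^ (-(2*p)) * ((k:ℝ) + 1) ^ (-(2:ℝ)) := b2
      _ ≤ 1/2 * 1 * ((k:ℝ) + 1) ^ (-(2:ℝ)) := by nlinarith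
      _ = 1/2 * ((k:ℝ) + 1) ^ (-(2:ℝ)) := by ring
  have ht : Summable t := Summable.of_nonneg_of_le hnn hmaj (hs2.mul_left _)
  -- the cut point M
  have hsq0 : 0 < Real.sqrt h := Real.sqrt_pos.mpr hh0
  have hsq1 : Real.sqrt h < 1 := by
    nlinarith [Real.sq_sqrt hhp, Real.sqrt_nonneg h]
  set r : ℝ := (Real.sqrt h)⁻¹ with hrdef
  have hr0 : 0 < r := by positivity
  have hr1 : 1 < r := one_lt_inv₀ hsq0 |>.mpr hsq1
  obtain ⟨M, hM1, hMr, hMr2⟩ : ∃ M : ℕ, 1 ≤ M ∧ r ≤ (M:ℝ) ∧ (M:ℝ) ≤ 2 * r := by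
    refine ⟨⌈r⌉₊, ?_, Nat.le_ceil r, ?_⟩
    · have : 0 < ⌈r⌉₊ := Nat.ceil_pos.mpr hr0
      omega
    · have := Nat.ceil_lt_add_one hr0.le
      linarith
  have hM0 : (0:ℝ) < M := lt_of_lt_of_le hr0 hMr
  -- rpow bookkeeping
  have hrh : r = h ^ (-(1/2) : ℝ) := by
    rw [hrdef, Real.sqrt_eq_rpow, ← Real.rpow_neg hhp]
  have key1 : r ^ (3 - 2*p) = h ^ (p - 3/2) := by
    rw [hrh, ← Real.rpow_mul hhp]; congr 1; ring
  have key2 : r ^ (-(2*p + 1)) = h ^ (p + 1/2) := by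
    rw [hrh, ← Real.rpow_mul hhp]; congr 1; ring
  have hh2 : h ^ 2 * h ^ (p - 3/2) = h ^ (p + 1/2) := by
    rw [← Real.rpow_natCast h 2, ← Real.rpow_add hh0]; congr 1; push_cast; ring
  -- split the sum
  rw [← Summable.sum_add_tsum_nat_add M ht]
  -- finite part
  have finite_bound : ∑ k ∈ Finset.range M, t k ≤ 96 * h ^ (p + 1/2) := by
    have each : ∀ k ∈ Finset.range M, t k ≤ 12 * (M:ℝ) ^ (2 - 2*p) * h ^ 2 := by
      intro k hk
      have b1 := term_B1 p h hp0 hp1 hhp k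
      have hkM : (k:ℝ) + 1 ≤ (M:ℝ) := by
        have hk' : k + 1 ≤ M := Nat.succ_le_of_lt (Finset.mem_range.mp hk)
        exact_mod_cast hk'
      have mono : ((k:ℝ) + 1) ^ (2 - 2*p) ≤ (M:ℝ) ^ (2 - 2*p) :=
        Real.rpow_le_rpow (by positivity) hkM (by linarith)
      calc t k ≤ 12 * ((k:ℝ) + 1) ^ (2 - 2*p) * h ^ 2 := b1
        _ ≤ 12 * (M:ℝ) ^ (2 - 2*p) * h ^ 2 := by
            have : (0:ℝ) ≤ h ^ 2 := sq_nonneg h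
            nlinarith
    have sum_le : ∑ k ∈ Finset.range M, t k ≤ M * (12 * (M:ℝ) ^ (2 - 2*p) * h ^ 2) := by
      have := Finset.sum_le_card_nsmul (Finset.range M) t _ each
      simpa [Finset.card_range, nsmul_eq_mul] using this
    have hMM : (M:ℝ) * (M:ℝ) ^ (2 - 2*p) = (M:ℝ) ^ (3 - 2*p) := by
      nth_rewrite 1 [← Real.rpow_one (M:ℝ)]
      rw [← Real.rpow_add hM0]; congr 1; ring
    have hM3 : (M:ℝ) ^ (3 - 2*p) ≤ 8 * r ^ (3 - 2*p) := by
      have e1 : (M:ℝ) ^ (3 - 2*p) ≤ (2*r) ^ (3 - 2*p) :=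
        Real.rpow_le_rpow hM0.le hMr2 (by linarith)
      have e2 : (2*r) ^ (3 - 2*p) = (2:ℝ) ^ (3 - 2*p) * r ^ (3 - 2*p) :=
        Real.mul_rpow (by norm_num) hr0.le
      have e3 : (2:ℝ) ^ (3 - 2*p) ≤ (2:ℝ) ^ (3:ℝ) :=
        Real.rpow_le_rpow_of_exponent_le (by norm_num) (by linarith)
      have e4 : (2:ℝ) ^ (3:ℝ) = 8 := by
        rw [show (3:ℝ) = ((3:ℕ):ℝ) by norm_num, Real.rpow_natCast]; norm_num
      have e5 : (0:ℝ) ≤ r ^ (3 - 2*p) := Real.rpow_nonneg hr0.le _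
      nlinarith
    calc ∑ k ∈ Finset.range M, t k ≤ M * (12 * (M:ℝ) ^ (2 - 2*p) * h ^ 2) := sum_le
      _ = 12 * h ^ 2 * ((M:ℝ) * (M:ℝ) ^ (2 - 2*p)) := by ring
      _ = 12 * h ^ 2 * (M:ℝ) ^ (3 - 2*p) := by rw [hMM]
      _ ≤ 12 * h ^ 2 * (8 * r ^ (3 - 2*p)) := by
          have : (0:ℝ) ≤ 12 * h ^ 2 := by positivity
          exact mul_le_mul_of_nonneg_left hM3 this
      _ = 96 * (h ^ 2 * h ^ (p - 3/2)) := by rw [key1]; ring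
      _ = 96 * h ^ (p + 1/2) := by rw [hh2]
  -- tail part
  have tail_bound : ∑' k, t (k + M) ≤ 1/2 * h ^ (p + 1/2) := by
    have hM1' : (1:ℝ) ≤ (M:ℝ) := by exact_mod_cast hM1
    have tmaj : ∀ k : ℕ, t (k + M) ≤
        (1/2 * (M:ℝ) ^ (-(2*p))) * (1 / (((k:ℝ) + M) * ((k:ℝ) + M + 1))) := by
      intro k
      have b2 := term_B2 p h hp0 hhp (k + M)
      have hk0 : (0:ℝ) ≤ (k:ℝ) := Nat.cast_nonneg k
      have hc : ((k + M : ℕ):ℝ) + 1 = (k:ℝ) + M + 1 := by push_cast; ring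
      rw [hc] at b2
      have hkM : (0:ℝ) < (k:ℝ) + M := by linarith
      have e1 : ((k:ℝ) + M + 1) ^ (-(2*p)) ≤ (M:ℝ) ^ (-(2*p)) :=
        Real.rpow_le_rpow_of_nonpos hM0 (by linarith) (by linarith)
      have e2 : ((k:ℝ) + M + 1) ^ (-(2:ℝ)) ≤ 1 / (((k:ℝ) + M) * ((k:ℝ) + M + 1)) := by
        have hx : (0:ℝ) < (k:ℝ) + M + 1 := by linarith
        have h2 : ((k:ℝ) + M + 1) ^ (-(2:ℝ)) = 1 / ((k:ℝ) + M + 1) ^ 2 := by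
          rw [Real.rpow_neg hx.le, one_div]
          congr 1
          rw [← Real.rpow_natCast ((k:ℝ) + M + 1) 2]
          norm_num
        rw [h2]
        apply one_div_le_one_div_of_le (by positivity)
        nlinarith
      have p1 : (0:ℝ) ≤ ((k:ℝ) + M + 1) ^ (-(2:ℝ)) := Real.rpow_nonneg (by linarith) _
      have p2 : (0:ℝ) ≤ (M:ℝ) ^ (-(2*p)) := Real.rpow_nonneg hM0.le _
      calc t (k + M) ≤ 1/2 * ((k:ℝ) + M + 1) ^ (-(2*p)) * ((k:ℝ) + M + 1) ^ (-(2:ℝ)) := b2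
        _ ≤ (1/2 * (M:ℝ) ^ (-(2*p))) * (1 / (((k:ℝ) + M) * ((k:ℝ) + M + 1))) := by
            apply mul_le_mul (by linarith) e2 p1 (by positivity)
    have htel := telesc M hM1
    have hsum_tel : Summable (fun k : ℕ => 1 / (((k:ℝ) + M) * ((k:ℝ) + M + 1))) :=
      htel.summable
    have httail : Summable (fun k => t (k + M)) := (summable_nat_add_iff M).mpr ht
    have hMpow : (M:ℝ) ^ (-(2*p)) * (M:ℝ) ^ (-(1:ℝ)) = (M:ℝ) ^ (-(2*p + 1)) := by
      rw [← Real.rpow_add hM0]; congr 1; ring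
    have hMle : (M:ℝ) ^ (-(2*p + 1)) ≤ r ^ (-(2*p + 1)) :=
      Real.rpow_le_rpow_of_nonpos hr0 hMr (by linarith)
    calc ∑' k, t (k + M)
        ≤ ∑' k : ℕ, (1/2 * (M:ℝ) ^ (-(2*p))) * (1 / (((k:ℝ) + M) * ((k:ℝ) + M + 1))) :=
          Summable.tsum_le_tsum tmaj httail (hsum_tel.mul_left _)
      _ = (1/2 * (M:ℝ) ^ (-(2*p))) * (1 / (M:ℝ)) := by rw [tsum_mul_left, htel.tsum_eq]
      _ = 1/2 * (M:ℝ) ^ (-(2*p + 1)) := by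
          rw [← hMpow, Real.rpow_neg_one]; ring
      _ ≤ 1/2 * r ^ (-(2*p + 1)) := by linarith
      _ = 1/2 * h ^ (p + 1/2) := by rw [key2]
  have hpow : (0:ℝ) ≤ h ^ (p + 1/2) := Real.rpow_nonneg hhp _
  linarith
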